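/- Let A_1, ..., A_{n+2} and B_1, ..., B_{n+2} be dual configurations in R^n (i.e., (A_i - A_j)·(B_k - B_l) = 0 for all pairwise distinct i,j,k,l, with every n+1 of each family affinely independent), normalized so their affine dependence coefficients coincide: α_i with ∑ α_i = 0, ∑ α_i A_i = 0, ∑ α_i B_i = 0. Define C_1, C_2 as the n×n matrices with rows A_i - A_{n+1}, A_i - A_{n+2} (i ≤ n), E_1, E_2 the matrices with rows B_i - B_{n+1}, B_i - B_{n+2}, and D = diag(α_1,...,α_n). Then (C_2^T D C_1)(E_2^T D E_1) = c·I_n for some nonzero constant c. -/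

import Mathlib

open Finset Matrix

private lemma dot_sum_zero' {n m : ℕ} (w : Fin m → Fin n → ℝ) (β : Fin m → ℝ)
    (u : Fin n → ℝ) (hz : ∑ k, β k • w k = 0) :
    ∑ k, β k * (u ⬝ᵥ w k) = 0 := by
  have hzx : ∀ x, ∑ k, β k * w k x = 0 := fun x => by
    simpa using congrFun hz x
  calc ∑ k, β k * (u ⬝ᵥ w k) = ∑ k, ∑ x, u x * (β k * w k x) := by
        refine Finset.sum_congr rfl fun k _ => ?_
        rw [dotProduct, Finset.mul_sum]
        exact Finset.sum_congr rfl fun x _ => by ring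
    _ = ∑ x, u x * ∑ k, β k * w k x := by
        rw [Finset.sum_comm]
        exact Finset.sum_congr rfl fun x _ => (Finset.mul_sum _ _ _).symm
    _ = 0 := by simp [hzx]

/-- For dual configurations `A`, `B` in `ℝ^n` with common affine dependence coefficients
`α`, the product `(C₂ᵀ D C₁)(E₂ᵀ D E₁)` is a nonzero scalar multiple of the identity. -/
theorem matrix_product_scalar_identity (n : ℕ) (hn : 2 ≤ n)
    (A B : Fin (n + 2) → (Fin n → ℝ))
    (hA : ∀ i : Fin (n + 2),
      AffineIndependent ℝ (fun j : {j : Fin (n + 2) // j ≠ i} => A j.val))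
    (hB : ∀ i : Fin (n + 2),
      AffineIndependent ℝ (fun j : {j : Fin (n + 2) // j ≠ i} => B j.val))
    (hdual : ∀ i j k l : Fin (n + 2), i ≠ j → i ≠ k → i ≠ l → j ≠ k → j ≠ l → k ≠ l →
      (A i - A j) ⬝ᵥ (B k - B l) = 0)
    (α : Fin (n + 2) → ℝ) (hα0 : ∀ i, α i ≠ 0) (hsum : ∑ i, α i = 0)
    (hdepA : ∑ i, α i • A i = 0) (hdepB : ∑ i, α i • B i = 0)
    (C₁ C₂ E₁ E₂ D : Matrix (Fin n) (Fin n) ℝ)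
    (hC₁ : C₁ = Matrix.of fun i j => (A (Fin.castAdd 2 i) - A ⟨n, by omega⟩) j)
    (hC₂ : C₂ = Matrix.of fun i j => (A (Fin.castAdd 2 i) - A (Fin.last (n + 1))) j)
    (hE₁ : E₁ = Matrix.of fun i j => (B (Fin.castAdd 2 i) - B ⟨n, by omega⟩) j)
    (hE₂ : E₂ = Matrix.of fun i j => (B (Fin.castAdd 2 i) - B (Fin.last (n + 1))) j)
    (hD : D = Matrix.diagonal fun i => α (Fin.castAdd 2 i)) :
    ∃ c : ℝ, c ≠ 0 ∧
      (C₂ᵀ * D * C₁) * (E₂ᵀ * D * E₁) = c • (1 : Matrix (Fin n) (Fin n) ℝ) := by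
  -- notation
  set p : Fin (n + 2) := ⟨n, by omega⟩ with hp
  set q : Fin (n + 2) := Fin.last (n + 1) with hq
  have hιp : ∀ i : Fin n, Fin.castAdd 2 i ≠ p := by
    intro i h
    have h' := congrArg Fin.val h
    simp [hp, Fin.coe_castAdd] at h'
    omega
  have hιq : ∀ i : Fin n, Fin.castAdd 2 i ≠ q := by
    intro i h
    have h' := congrArg Fin.val h
    simp [hq, Fin.coe_castAdd, Fin.val_last] at h'
    omega
  have hpq : p ≠ q := by
    intro h
    have h' := congrArg Fin.val h
    simp [hp, hq, Fin.val_last] at h'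
  have hιinj : ∀ a b : Fin n, Fin.castAdd 2 a = Fin.castAdd 2 b → a = b := by
    intro a b h
    exact Fin.ext (by simpa [Fin.ext_iff] using h)
  have hιne : ∀ a b : Fin n, a ≠ b → Fin.castAdd 2 a ≠ Fin.castAdd 2 b :=
    fun a b hab h => hab (hιinj a b h)
  -- the two key dependence-based scalar identities
  have hzB : ∀ m : Fin (n + 2), ∑ k, α k • (B k - B m) = 0 := by
    intro m
    simp only [smul_sub]
    rw [Finset.sum_sub_distrib, ← Finset.sum_smul, hsum, hdepB, zero_smul, sub_zero]
  have hzA : ∀ m : Fin (n + 2), ∑ k, α k • (A k - A m) = 0 := by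
    intro m
    simp only [smul_sub]
    rw [Finset.sum_sub_distrib, ← Finset.sum_smul, hsum, hdepA, zero_smul, sub_zero]
  have twoB : ∀ u v m : Fin (n + 2), u ≠ v → u ≠ m → v ≠ m →
      α u * ((A u - A v) ⬝ᵥ (B u - B m)) + α v * ((A u - A v) ⬝ᵥ (B v - B m)) = 0 := by
    intro u v m huv hum hvm
    have h0 := dot_sum_zero' (fun k => B k - B m) α (A u - A v) (hzB m)
    have hred : ∑ k, α k * ((A u - A v) ⬝ᵥ (B k - B m))
        = ∑ k ∈ ({u, v} : Finset (Fin (n + 2))), α k * ((A u - A v) ⬝ᵥ (B k - B m)) := by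
      refine (Finset.sum_subset (Finset.subset_univ _) ?_).symm
      intro k _ hk
      simp only [Finset.mem_insert, Finset.mem_singleton, not_or] at hk
      obtain ⟨hku, hkv⟩ := hk
      by_cases hkm : k = m
      · subst hkm; simp
      · rw [hdual u v k m huv (Ne.symm hku) hum (Ne.symm hkv) hvm hkm, mul_zero]
    rw [hred, Finset.sum_pair huv] at h0
    exact h0
  have twoA : ∀ u v m : Fin (n + 2), u ≠ v → u ≠ m → v ≠ m →
      α u * ((A u - A m) ⬝ᵥ (B u - B v)) + α v * ((A v - A m) ⬝ᵥ (B u - B v)) = 0 := by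
    intro u v m huv hum hvm
    have h0 : ∑ k, α k * ((A k - A m) ⬝ᵥ (B u - B v)) = 0 := by
      have h0' := dot_sum_zero' (fun k => A k - A m) α (B u - B v) (hzA m)
      calc ∑ k, α k * ((A k - A m) ⬝ᵥ (B u - B v))
          = ∑ k, α k * ((B u - B v) ⬝ᵥ (A k - A m)) := by
            exact Finset.sum_congr rfl fun k _ => by rw [dotProduct_comm]
        _ = 0 := h0'
    have hred : ∑ k, α k * ((A k - A m) ⬝ᵥ (B u - B v))
        = ∑ k ∈ ({u, v} : Finset (Fin (n + 2))), α k * ((A k - A m) ⬝ᵥ (B u - B v)) := by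
      refine (Finset.sum_subset (Finset.subset_univ _) ?_).symm
      intro k _ hk
      simp only [Finset.mem_insert, Finset.mem_singleton, not_or] at hk
      obtain ⟨hku, hkv⟩ := hk
      by_cases hkm : k = m
      · subst hkm; simp
      · rw [hdual k m u v hkm hku hkv (Ne.symm hum) (Ne.symm hvm) huv, mul_zero]
    rw [hred, Finset.sum_pair huv] at h0
    exact h0
  -- diagonal entries
  set r₁ : Fin n → ℝ := fun i => (A (Fin.castAdd 2 i) - A p) ⬝ᵥ (B (Fin.castAdd 2 i) - B q)
    with hr₁
  set r₂ : Fin n → ℝ := fun i => (A (Fin.castAdd 2 i) - A q) ⬝ᵥ (B (Fin.castAdd 2 i) - B p)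
    with hr₂
  -- the diagonalization of the mixed products
  have hprod1 : C₁ * E₂ᵀ = Matrix.diagonal r₁ := by
    ext i j
    rw [hC₁, hE₂, Matrix.mul_apply]
    by_cases hij : i = j
    · subst hij
      rw [Matrix.diagonal_apply_eq]
      rfl
    · rw [Matrix.diagonal_apply_ne _ hij]
      exact hdual (Fin.castAdd 2 i) p (Fin.castAdd 2 j) q (hιp i)
        (hιne i j hij) (hιq i) (Ne.symm (hιp j)) hpq (hιq j)
  have hprod2 : E₁ * C₂ᵀ = Matrix.diagonal r₂ := by
    ext i j
    rw [hE₁, hC₂, Matrix.mul_apply]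
    have : ∑ k, (B (Fin.castAdd 2 i) - B p) k * (A (Fin.castAdd 2 j) - A q) k
        = (A (Fin.castAdd 2 j) - A q) ⬝ᵥ (B (Fin.castAdd 2 i) - B p) := dotProduct_comm _ _
    rw [show (∑ k, Matrix.of (fun i j => (B (Fin.castAdd 2 i) - B p) j) i k *
        (Matrix.of (fun i j => (A (Fin.castAdd 2 i) - A q) j))ᵀ k j)
        = (A (Fin.castAdd 2 j) - A q) ⬝ᵥ (B (Fin.castAdd 2 i) - B p) from this]
    by_cases hij : i = j
    · subst hij
      rw [Matrix.diagonal_apply_eq]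
    · rw [Matrix.diagonal_apply_ne _ hij]
      exact hdual (Fin.castAdd 2 j) q (Fin.castAdd 2 i) p (hιq j)
        (hιne j i (Ne.symm hij)) (hιp j) (Ne.symm (hιq i)) (Ne.symm hpq) (hιp i)
  -- invertibility of E₁ and C₂
  have hE₁unit : IsUnit E₁ := by
    rw [← Matrix.linearIndependent_rows_iff_isUnit]
    have h := (affineIndependent_iff_linearIndependent_vsub ℝ
      (fun j : {j : Fin (n + 2) // j ≠ q} => B j.val) ⟨p, hpq⟩).mp (hB q)
    have h2 := h.comp
      (fun i : Fin n => (⟨⟨Fin.castAdd 2 i, hιq i⟩, by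
        simp only [ne_eq, Subtype.mk.injEq]; exact hιp i⟩ :
        {x : {j : Fin (n + 2) // j ≠ q} // x ≠ ⟨p, hpq⟩}))
      (by
        intro a b hab
        apply hιinj
        simpa [Subtype.ext_iff] using hab)
    have : LinearIndependent ℝ (fun i : Fin n => B (Fin.castAdd 2 i) - B p) := by
      simpa [vsub_eq_sub, Function.comp_def] using h2
    rw [hE₁]
    exact this
  have hC₂unit : IsUnit C₂ := by
    rw [← Matrix.linearIndependent_rows_iff_isUnit]
    have h := (affineIndependent_iff_linearIndependent_vsub ℝ
      (fun j : {j : Fin (n + 2) // j ≠ p} => A j.val) ⟨q, Ne.symm hpq⟩).mp (hA p)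
    have h2 := h.comp
      (fun i : Fin n => (⟨⟨Fin.castAdd 2 i, hιp i⟩, by
        simp only [ne_eq, Subtype.mk.injEq]; exact hιq i⟩ :
        {x : {j : Fin (n + 2) // j ≠ p} // x ≠ ⟨q, Ne.symm hpq⟩}))
      (by
        intro a b hab
        apply hιinj
        simpa [Subtype.ext_iff] using hab)
    have : LinearIndependent ℝ (fun i : Fin n => A (Fin.castAdd 2 i) - A q) := by
      simpa [vsub_eq_sub, Function.comp_def] using h2
    rw [hC₂]
    exact this
  have hC2Tunit : IsUnit C₂ᵀ := (Matrix.isUnit_transpose C₂).mpr hC₂unit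
  -- r₂ is nowhere zero on index 0
  have i0 : Fin n := ⟨0, by omega⟩
  have hr₂0 : r₂ ⟨0, by omega⟩ ≠ 0 := by
    have hud : IsUnit (Matrix.diagonal r₂) := hprod2 ▸ hE₁unit.mul hC2Tunit
    rw [Matrix.isUnit_iff_isUnit_det, Matrix.det_diagonal, isUnit_iff_ne_zero] at hud
    intro h
    exact hud (Finset.prod_eq_zero (Finset.mem_univ _) h)
  -- the constant
  set c' : ℝ := α q * ((A q - A (Fin.castAdd 2 ⟨0, by omega⟩)) ⬝ᵥ (B q - B p)) with hc'def
  have hindep : ∀ i : Fin n,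
      (A q - A (Fin.castAdd 2 i)) ⬝ᵥ (B q - B p)
        = (A q - A (Fin.castAdd 2 ⟨0, by omega⟩)) ⬝ᵥ (B q - B p) := by
    intro i
    by_cases h0 : i = ⟨0, by omega⟩
    · subst h0; rfl
    · have hsplit : A q - A (Fin.castAdd 2 i)
          = (A q - A (Fin.castAdd 2 ⟨0, by omega⟩))
            - (A (Fin.castAdd 2 i) - A (Fin.castAdd 2 ⟨0, by omega⟩)) := by
        abel
      rw [hsplit, sub_dotProduct,
        hdual (Fin.castAdd 2 i) (Fin.castAdd 2 ⟨0, by omega⟩) q p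
          (hιne i ⟨0, by omega⟩ h0) (hιq i) (hιp i)
          (hιq ⟨0, by omega⟩) (hιp ⟨0, by omega⟩) (Ne.symm hpq),
        sub_zero]
  have hαr₂ : ∀ i : Fin n, α (Fin.castAdd 2 i) * r₂ i = c' := by
    intro i
    have h2 := twoB (Fin.castAdd 2 i) q p (hιq i) (hιp i) (Ne.symm hpq)
    have hneg : (A (Fin.castAdd 2 i) - A q) ⬝ᵥ (B q - B p)
        = -((A q - A (Fin.castAdd 2 i)) ⬝ᵥ (B q - B p)) := by
      rw [← neg_dotProduct, neg_sub]
    rw [hneg] at h2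
    rw [hc'def, ← hindep i]
    simp only [hr₂]
    linarith
  have hαr₁ : ∀ i : Fin n, α (Fin.castAdd 2 i) * r₁ i = c' := by
    intro i
    have h2 := twoB (Fin.castAdd 2 i) p q (hιp i) (hιq i) hpq
    have h3 := twoA q p (Fin.castAdd 2 i) (Ne.symm hpq) (Ne.symm (hιq i)) (Ne.symm (hιp i))
    have hswap : (A (Fin.castAdd 2 i) - A p) ⬝ᵥ (B p - B q)
        = (A p - A (Fin.castAdd 2 i)) ⬝ᵥ (B q - B p) := by
      rw [← neg_sub (A p), ← neg_sub (B q), neg_dotProduct, dotProduct_neg, neg_neg]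
    rw [hswap] at h2
    rw [hc'def, ← hindep i]
    simp only [hr₁]
    linarith
  have hc' : c' ≠ 0 := by
    rw [← hαr₂ ⟨0, by omega⟩]
    exact mul_ne_zero (hα0 _) hr₂0
  -- matrix computations
  have hDdiag : D * Matrix.diagonal r₁ * D = c' • D := by
    rw [hD, Matrix.diagonal_mul_diagonal, Matrix.diagonal_mul_diagonal, ← Matrix.diagonal_smul]
    refine congrArg Matrix.diagonal (funext fun i => ?_)
    show α (Fin.castAdd 2 i) * r₁ i * α (Fin.castAdd 2 i) = c' * α (Fin.castAdd 2 i)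
    rw [← hαr₁ i]
  have hdiagD : Matrix.diagonal r₂ * D = c' • 1 := by
    rw [hD, Matrix.diagonal_mul_diagonal, ← Matrix.diagonal_one, ← Matrix.diagonal_smul]
    refine congrArg Matrix.diagonal (funext fun i => ?_)
    show r₂ i * α (Fin.castAdd 2 i) = c' * 1
    rw [← hαr₂ i]
    ring
  have key2 : C₂ᵀ * D * E₁ = c' • 1 := by
    have h1 : E₁ * (C₂ᵀ * D * E₁) = E₁ * (c' • 1) := by
      calc E₁ * (C₂ᵀ * D * E₁) = E₁ * C₂ᵀ * D * E₁ := by simp only [Matrix.mul_assoc]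
        _ = Matrix.diagonal r₂ * D * E₁ := by rw [hprod2]
        _ = (c' • 1) * E₁ := by rw [hdiagD]
        _ = E₁ * (c' • 1) := by
            rw [Matrix.smul_mul, Matrix.one_mul, Matrix.mul_smul, Matrix.mul_one]
    exact hE₁unit.mul_left_cancel h1
  refine ⟨c' * c', mul_ne_zero hc' hc', ?_⟩
  calc (C₂ᵀ * D * C₁) * (E₂ᵀ * D * E₁)
      = C₂ᵀ * ((D * (C₁ * E₂ᵀ) * D) * E₁) := by simp only [Matrix.mul_assoc]
    _ = C₂ᵀ * ((D * Matrix.diagonal r₁ * D) * E₁) := by rw [hprod1]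
    _ = C₂ᵀ * ((c' • D) * E₁) := by rw [hDdiag]
    _ = c' • (C₂ᵀ * D * E₁) := by
        rw [Matrix.smul_mul, Matrix.mul_smul, Matrix.mul_assoc]
    _ = c' • (c' • (1 : Matrix (Fin n) (Fin n) ℝ)) := by rw [key2]
    _ = (c' * c') • 1 := smul_smul c' c' 1
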